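/- arXiv:2208.06330 — 5 statements merged into one kernel-verified Lean document; each statement's English description precedes it below -/
import Mathlib

section
/- Let G be a topological group and let A and B be compact subsets of G with B a neighborhood of the identity e. Then for every k ∈ ℕ there exists a finite subset S of G such that for all n ∈ ℕ with n ≥ 1, B^{k+n-1}A ⊆ BⁿS. -/
open Pointwise Topology

theorem finite_right_covering
    {G : Type*} [Group G] [TopologicalSpace G] [IsTopologicalGroup G]
    (A B : Set G) (hA : IsCompact A) (hB : IsCompact B) (hBnhd : B ∈ 𝓝 (1 : G))
    (k : ℕ) :
    ∃ S : Finset G, ∀ n : ℕ, 1 ≤ n → B ^ (k + n - 1) * A ⊆ B ^ n * (S : Set G) := by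
  have hBk : ∀ m : ℕ, IsCompact (B ^ m) := by
    intro m
    induction m with
    | zero => rw [pow_zero]; exact isCompact_singleton
    | succ m ih => rw [pow_succ]; exact ih.mul hB
  have hC : IsCompact (B ^ k * A) := (hBk k).mul hA
  have h1 : (1 : G) ∈ interior B := mem_interior_iff_mem_nhds.2 hBnhd
  obtain ⟨t, -, ht⟩ := hC.elim_nhds_subcover (fun c => interior B * {c}) (by
    intro c _
    have hopen : IsOpen (interior B * {c}) := isOpen_interior.mul_right
    exact hopen.mem_nhds ⟨1, h1, c, rfl, one_mul c⟩)
  refine ⟨t, fun n hn x hx => ?_⟩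
  have hsub : B ^ k * A ⊆ B * (t : Set G) := by
    intro y hy
    obtain ⟨s, hst, b, hb, c, hc, rfl⟩ := Set.mem_iUnion₂.1 (ht hy)
    exact ⟨b, interior_subset hb, c, by simpa using hc ▸ hst, rfl⟩
  have hk : k + n - 1 = n - 1 + k := by omega
  rw [hk, pow_add, mul_assoc] at hx
  have : x ∈ B ^ (n - 1) * (B * (t : Set G)) :=
    Set.mul_subset_mul_left hsub hx
  rw [← mul_assoc, ← pow_succ, Nat.sub_add_cancel hn] at this
  exact this
end

section
/- Let G be a locally compact Hausdorff group, μ_G a right Haar measure on G, and A, B compact subsets of G with B a neighborhood of the identity. Then for every k ∈ ℕ there exists a constant c > 0 such that for all n ∈ ℕ with n ≥ 1, μ_G(B^{n+k-1}A) ≤ c·μ_G(Bⁿ). -/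
open MeasureTheory Pointwise Topology
open scoped ENNReal NNReal

theorem haar_volume_growth
    {G : Type*} [Group G] [TopologicalSpace G] [IsTopologicalGroup G]
    [LocallyCompactSpace G] [T2Space G] [MeasurableSpace G] [BorelSpace G]
    -- a right Haar measure on `G`: a nonzero right-invariant regular Borel measure
    (μG : Measure G) [μG.IsMulRightInvariant] [μG.Regular] (hμG : μG ≠ 0)
    (A B : Set G) (hA : IsCompact A) (hB : IsCompact B) (hBnhd : B ∈ 𝓝 (1 : G))
    (k : ℕ) :
    ∃ c : ℝ≥0, 0 < c ∧ ∀ n : ℕ, 1 ≤ n → μG (B ^ (n + k - 1) * A) ≤ c * μG (B ^ n) := by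
  -- cover the compact set C = B^k * A by finitely many right translates of B
  set C : Set G := B ^ k * A with hC
  have hpow : ∀ m : ℕ, IsCompact (B ^ m) := by
    intro m
    induction m with
    | zero => rw [pow_zero, ← Set.singleton_one]; exact isCompact_singleton
    | succ m ih => rw [pow_succ]; exact ih.mul hB
  have hCcomp : IsCompact C := (hpow k).mul hA
  have hcov : ∀ x ∈ C, B * {x} ∈ 𝓝 x := by
    intro x _
    have : B * {x} = (· * x⁻¹) ⁻¹' B := by
      ext y
      simp [Set.mem_mul, eq_comm, mul_inv_eq_iff_eq_mul]
    rw [this]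
    exact (Homeomorph.mulRight x⁻¹).continuous.continuousAt.preimage_mem_nhds
      (by simpa using hBnhd)
  obtain ⟨t, -, ht⟩ := hCcomp.elim_nhds_subcover (fun x => B * {x}) hcov
  refine ⟨t.card + 1, by positivity, fun n hn => ?_⟩
  have hsub : B ^ (n + k - 1) * A ⊆ ⋃ x ∈ t, B ^ n * {x} := by
    have h1 : B ^ (n + k - 1) * A = B ^ (n - 1) * C := by
      rw [hC, ← mul_assoc, ← pow_add]
      congr 2
      omega
    rw [h1]
    intro y hy
    obtain ⟨b, hb, c, hc, rfl⟩ := hy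
    obtain ⟨x, hxt, hx⟩ := Set.mem_iUnion₂.1 (ht hc)
    obtain ⟨b', hb', z, hz, rfl⟩ := hx
    simp only [Set.mem_singleton_iff] at hz
    subst hz
    refine Set.mem_biUnion hxt ?_
    show b * (b' * z) ∈ B ^ n * {z}
    rw [← mul_assoc]
    refine Set.mul_mem_mul ?_ rfl
    have : b * b' ∈ B ^ (n - 1) * B ^ 1 := Set.mul_mem_mul hb (by simpa using hb')
    rwa [← pow_add, Nat.sub_add_cancel hn] at this
  calc μG (B ^ (n + k - 1) * A) ≤ μG (⋃ x ∈ t, B ^ n * {x}) := measure_mono hsub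
    _ ≤ ∑ x ∈ t, μG (B ^ n * {x}) := measure_biUnion_finset_le t _
    _ = ∑ x ∈ t, μG (B ^ n) := by
        refine Finset.sum_congr rfl fun x _ => ?_
        have : B ^ n * {x} = (· * x⁻¹) ⁻¹' (B ^ n) := by
          ext y
          simp [Set.mem_mul, eq_comm, mul_inv_eq_iff_eq_mul]
        rw [this, measure_preimage_mul_right]
    _ = t.card * μG (B ^ n) := by rw [Finset.sum_const, nsmul_eq_mul]
    _ ≤ ((↑t.card + 1 : ℝ≥0) : ℝ≥0∞) * μG (B ^ n) := by
        refine mul_le_mul_left ?_ _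
        push_cast
        exact le_self_add
end

section
/- Let G be a locally compact Hausdorff unimodular group, and let A₁, A₂, B be compact neighborhoods of the identity e in G. Then there exist constants c₁, c₂ > 0 such that for all n ≥ 3, for every maximal A₁-separated net N₁ of Bⁿ and every maximal A₂-separated net N₂ of B^{n-2}, one has c₁ ≤ |N₂|/|N₁| ≤ c₂. -/
open MeasureTheory Pointwise Topology
open scoped ENNReal NNReal

/-- `N` is an `A`-separated net of `B`: a finite subset of `B` such that the translates
`n • A`, `n ∈ N`, are pairwise disjoint. -/
def IsSepNet {G : Type*} [Group G] (A B N : Set G) : Prop :=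
  N.Finite ∧ N ⊆ B ∧ ∀ n₁ ∈ N, ∀ n₂ ∈ N, (n₁ • A ∩ n₂ • A).Nonempty → n₁ = n₂

/-- `N` is a maximal `A`-separated net of `B`. -/
def IsMaxSepNet {G : Type*} [Group G] (A B N : Set G) : Prop :=
  IsSepNet A B N ∧ ∀ N' : Set G, IsSepNet A B N' → N ⊆ N' → N = N'

section Aux

variable {G : Type*} [Group G] [TopologicalSpace G] [IsTopologicalGroup G]
    [LocallyCompactSpace G] [T2Space G] [MeasurableSpace G] [BorelSpace G]

/-- A maximal separated net of a nonempty set is nonempty. -/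
lemma IsMaxSepNet.nonempty' {A C N : Set G} (h : IsMaxSepNet A C N) (hC : C.Nonempty) :
    N.Nonempty := by
  rcases N.eq_empty_or_nonempty with rfl | h'
  · obtain ⟨c, hc⟩ := hC
    have hsep : IsSepNet A C {c} := by
      refine ⟨Set.finite_singleton c, by simpa using hc, ?_⟩
      rintro n₁ rfl n₂ rfl _
      rfl
    have := h.2 {c} hsep (Set.empty_subset _)
    exact absurd this.symm (Set.singleton_ne_empty c)
  · exact h'

/-- Covering property of a maximal separated net. -/
lemma IsMaxSepNet.cover {A C N : Set G} (h : IsMaxSepNet A C N) (hA : A.Nonempty) :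
    C ⊆ ⋃ n ∈ N, n • (A * A⁻¹) := by
  obtain ⟨a₀, ha₀⟩ := hA
  have h1 : (1 : G) ∈ A * A⁻¹ := by
    simpa using Set.mul_mem_mul ha₀ (Set.inv_mem_inv.2 ha₀)
  intro b hb
  by_contra hb'
  have hkey : ∀ n ∈ N, ¬ (b • A ∩ n • A).Nonempty := by
    intro n hn ⟨x, ⟨a₁, ha₁, hx₁⟩, ⟨a₂, ha₂, hx₂⟩⟩
    apply hb'
    have hbmem : b ∈ n • (A * A⁻¹) := by
      refine ⟨a₂ * a₁⁻¹, Set.mul_mem_mul ha₂ (Set.inv_mem_inv.2 ha₁), ?_⟩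
      have : b * a₁ = n * a₂ := by
        simpa [smul_eq_mul] using hx₁.trans hx₂.symm
      simp only [smul_eq_mul]
      rw [← mul_assoc]
      rw [← this]
      group
    exact Set.mem_biUnion hn hbmem
  have hbN : b ∉ N := by
    intro hbN
    exact hb' (Set.mem_biUnion hbN ⟨1, h1, by simp⟩)
  have hsep : IsSepNet A C (insert b N) := by
    refine ⟨h.1.1.insert b, Set.insert_subset hb h.1.2.1, ?_⟩
    rintro n₁ (rfl | hn₁) n₂ (rfl | hn₂) hne
    · rfl
    · exact absurd hne (hkey _ hn₂)
    · obtain ⟨x, hx₁, hx₂⟩ := hne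
      exact ((hkey _ hn₁) ⟨x, hx₂, hx₁⟩).elim
    · exact h.1.2.2 _ hn₁ _ hn₂ hne
  have := h.2 _ hsep (Set.subset_insert b N)
  exact hbN (this ▸ Set.mem_insert b N)

/-- The measure of the union of translates of a separated net. -/
lemma IsSepNet.measure_biUnion {μ : Measure G} [μ.IsMulLeftInvariant] {A C N : Set G}
    (h : IsSepNet A C N) (hA : MeasurableSet A) :
    μ (⋃ n ∈ N, n • A) = (N.ncard : ℝ≥0∞) * μ A := by
  have hfin := h.1
  have hrw : (⋃ n ∈ N, n • A) = ⋃ n ∈ hfin.toFinset, n • A := by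
    simp [Set.Finite.mem_toFinset]
  rw [hrw, measure_biUnion_finset]
  · simp only [measure_smul, Finset.sum_const, nsmul_eq_mul]
    rw [Set.ncard_eq_toFinset_card N hfin]
  · intro n₁ hn₁ n₂ hn₂ hne
    have hn₁' : n₁ ∈ N := by simpa using hn₁
    have hn₂' : n₂ ∈ N := by simpa using hn₂
    refine Set.disjoint_left.2 fun x hx₁ hx₂ => hne ?_
    exact h.2.2 _ hn₁' _ hn₂' ⟨x, hx₁, hx₂⟩
  · exact fun n _ => hA.const_smul n

end Aux

theorem maximal_nets_cardinality_comparison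
    {G : Type*} [Group G] [TopologicalSpace G] [IsTopologicalGroup G]
    [LocallyCompactSpace G] [T2Space G] [MeasurableSpace G] [BorelSpace G]
    -- `G` is unimodular: a left Haar measure `μG` which is also right invariant
    (μG : Measure G) [μG.IsHaarMeasure] [μG.IsMulRightInvariant]
    (A₁ A₂ B : Set G)
    (hA₁ : IsCompact A₁) (hA₁nhd : A₁ ∈ 𝓝 (1 : G))
    (hA₂ : IsCompact A₂) (hA₂nhd : A₂ ∈ 𝓝 (1 : G))
    (hB : IsCompact B) (hBnhd : B ∈ 𝓝 (1 : G)) :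
    ∃ c₁ c₂ : ℝ, 0 < c₁ ∧ 0 < c₂ ∧
      ∀ n : ℕ, 3 ≤ n → ∀ N₁ N₂ : Set G,
        IsMaxSepNet A₁ (B ^ n) N₁ → IsMaxSepNet A₂ (B ^ (n - 2)) N₂ →
          c₁ ≤ (N₂.ncard : ℝ) / (N₁.ncard : ℝ) ∧ (N₂.ncard : ℝ) / (N₁.ncard : ℝ) ≤ c₂ := by
  have h1B : (1 : G) ∈ B := mem_of_mem_nhds hBnhd
  have h1A₁ : (1 : G) ∈ A₁ := mem_of_mem_nhds hA₁nhd
  have h1A₂ : (1 : G) ∈ A₂ := mem_of_mem_nhds hA₂nhd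
  set W₁ : Set G := A₁ * A₁⁻¹ with hW₁def
  set W₂ : Set G := A₂ * A₂⁻¹ with hW₂def
  have h1W₁ : (1 : G) ∈ W₁ := by
    simpa using Set.mul_mem_mul h1A₁ (Set.inv_mem_inv.2 h1A₁)
  have h1W₂ : (1 : G) ∈ W₂ := by
    simpa using Set.mul_mem_mul h1A₂ (Set.inv_mem_inv.2 h1A₂)
  have hB2 : IsCompact (B ^ 2) := by
    rw [sq]; exact hB.mul hB
  have h1B2 : (1 : G) ∈ B ^ 2 := Set.one_mem_pow h1B
  -- the two constant sets
  set X : Set G := W₁ * A₂ with hXdef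
  set Z : Set G := W₂ * B ^ 2 * A₁ with hZdef
  have hXc : IsCompact X := (hA₁.mul hA₁.inv).mul hA₂
  have hZc : IsCompact Z := ((hA₂.mul hA₂.inv).mul hB2).mul hA₁
  have hXnhd : X ∈ 𝓝 (1 : G) := by
    refine Filter.mem_of_superset hA₂nhd fun a ha => ?_
    simpa using Set.mul_mem_mul h1W₁ ha
  have hZnhd : Z ∈ 𝓝 (1 : G) := by
    refine Filter.mem_of_superset hA₁nhd fun a ha => ?_
    simpa using Set.mul_mem_mul (Set.mul_mem_mul h1W₂ h1B2) ha
  -- positivity and finiteness of the relevant measures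
  have hposA₁ := Measure.measure_pos_of_mem_nhds μG hA₁nhd
  have hposA₂ := Measure.measure_pos_of_mem_nhds μG hA₂nhd
  have hposX := Measure.measure_pos_of_mem_nhds μG hXnhd
  have hposZ := Measure.measure_pos_of_mem_nhds μG hZnhd
  have hfinA₁ := hA₁.measure_lt_top (μ := μG)
  have hfinA₂ := hA₂.measure_lt_top (μ := μG)
  have hfinX := hXc.measure_lt_top (μ := μG)
  have hfinZ := hZc.measure_lt_top (μ := μG)
  -- real constants
  have hrealA₁ : 0 < (μG A₁).toReal := ENNReal.toReal_pos hposA₁.ne' hfinA₁.ne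
  have hrealA₂ : 0 < (μG A₂).toReal := ENNReal.toReal_pos hposA₂.ne' hfinA₂.ne
  have hrealX : 0 < (μG X).toReal := ENNReal.toReal_pos hposX.ne' hfinX.ne
  have hrealZ : 0 < (μG Z).toReal := ENNReal.toReal_pos hposZ.ne' hfinZ.ne
  refine ⟨(μG A₁).toReal / (μG Z).toReal, (μG X).toReal / (μG A₂).toReal,
    div_pos hrealA₁ hrealZ, div_pos hrealX hrealA₂, ?_⟩
  intro n hn N₁ N₂ hN₁ hN₂
  obtain ⟨k, rfl⟩ : ∃ k, n = k + 3 := ⟨n - 3, by omega⟩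
  rw [show k + 3 - 2 = k + 1 by omega] at hN₂
  -- nonemptiness of the nets
  have hN₁ne : N₁.Nonempty := hN₁.nonempty' ⟨1, Set.one_mem_pow h1B⟩
  have hN₂ne : N₂.Nonempty := hN₂.nonempty' ⟨1, Set.one_mem_pow h1B⟩
  have hN₁pos : 0 < N₁.ncard := (Set.ncard_pos hN₁.1.1).2 hN₁ne
  have hN₂pos : 0 < N₂.ncard := (Set.ncard_pos hN₂.1.1).2 hN₂ne
  -- covering properties
  have cover₁ : B ^ (k + 3) ⊆ ⋃ m ∈ N₁, m • W₁ := hN₁.cover ⟨1, h1A₁⟩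
  have cover₂ : B ^ (k + 1) ⊆ ⋃ m ∈ N₂, m • W₂ := hN₂.cover ⟨1, h1A₂⟩
  have hpow : B ^ (k + 3) = B ^ (k + 1) * B ^ 2 := by
    rw [← pow_add]
  have hsubpow : B ^ (k + 1) ⊆ B ^ (k + 3) := by
    rw [hpow]; exact Set.subset_mul_left _ h1B2
  -- measure identities for the nets
  have e₁ : μG (⋃ n ∈ N₁, n • A₁) = (N₁.ncard : ℝ≥0∞) * μG A₁ :=
    hN₁.1.measure_biUnion hA₁.measurableSet
  have e₂ : μG (⋃ n ∈ N₂, n • A₂) = (N₂.ncard : ℝ≥0∞) * μG A₂ :=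
    hN₂.1.measure_biUnion hA₂.measurableSet
  -- generic bound for a union of translates over a finite set
  have union_le : ∀ (N : Set G) (hfin : N.Finite) (S : Set G),
      μG (⋃ m ∈ N, m • S) ≤ (N.ncard : ℝ≥0∞) * μG S := by
    intro N hfin S
    have hrw : (⋃ m ∈ N, m • S) = ⋃ m ∈ hfin.toFinset, m • S := by
      simp [Set.Finite.mem_toFinset]
    rw [hrw]
    refine (measure_biUnion_finset_le _ _).trans ?_
    simp only [measure_smul, Finset.sum_const, nsmul_eq_mul]
    rw [Set.ncard_eq_toFinset_card N hfin]
  -- upper bound inequality in ℝ≥0∞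
  have EU : (N₂.ncard : ℝ≥0∞) * μG A₂ ≤ (N₁.ncard : ℝ≥0∞) * μG X := by
    rw [← e₂]
    refine le_trans (measure_mono ?_) (union_le N₁ hN₁.1.1 X)
    intro x hx
    obtain ⟨n, hn, hxn⟩ := Set.mem_iUnion₂.1 hx
    have hnB : n ∈ B ^ (k + 3) := hsubpow (hN₂.1.2.1 hn)
    obtain ⟨m, hm, hnm⟩ := Set.mem_iUnion₂.1 (cover₁ hnB)
    obtain ⟨w, hw, rfl⟩ := hnm
    refine Set.mem_biUnion hm ?_
    have : (w • A₂ : Set G) ⊆ X := Set.smul_set_subset_mul hw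
    simp only [smul_eq_mul] at hxn
    rw [mul_smul] at hxn
    exact Set.smul_set_mono this hxn
  -- lower bound inequality in ℝ≥0∞
  have EL : (N₁.ncard : ℝ≥0∞) * μG A₁ ≤ (N₂.ncard : ℝ≥0∞) * μG Z := by
    rw [← e₁]
    refine le_trans (measure_mono ?_) (union_le N₂ hN₂.1.1 Z)
    intro x hx
    obtain ⟨n, hn, hxn⟩ := Set.mem_iUnion₂.1 hx
    have hnB : n ∈ B ^ (k + 1) * B ^ 2 := by rw [← hpow]; exact hN₁.1.2.1 hn
    obtain ⟨y, hy, z, hz, rfl⟩ := hnB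
    obtain ⟨m, hm, hym⟩ := Set.mem_iUnion₂.1 (cover₂ hy)
    obtain ⟨w, hw, rfl⟩ := hym
    refine Set.mem_biUnion hm ?_
    have hwz : w * z ∈ W₂ * B ^ 2 := Set.mul_mem_mul hw hz
    have : ((w * z) • A₁ : Set G) ⊆ Z := Set.smul_set_subset_mul hwz
    simp only [smul_eq_mul] at hxn
    rw [mul_assoc, mul_smul] at hxn
    exact Set.smul_set_mono this hxn
  -- convert to real inequalities
  have EUr : (N₂.ncard : ℝ) * (μG A₂).toReal ≤ (N₁.ncard : ℝ) * (μG X).toReal := by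
    have hne : (N₁.ncard : ℝ≥0∞) * μG X ≠ ⊤ :=
      ENNReal.mul_ne_top (ENNReal.natCast_ne_top _) hfinX.ne
    have := ENNReal.toReal_mono hne EU
    simpa [ENNReal.toReal_mul] using this
  have ELr : (N₁.ncard : ℝ) * (μG A₁).toReal ≤ (N₂.ncard : ℝ) * (μG Z).toReal := by
    have hne : (N₂.ncard : ℝ≥0∞) * μG Z ≠ ⊤ :=
      ENNReal.mul_ne_top (ENNReal.natCast_ne_top _) hfinZ.ne
    have := ENNReal.toReal_mono hne EL
    simpa [ENNReal.toReal_mul] using this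
  have hN₁posR : (0 : ℝ) < (N₁.ncard : ℝ) := by exact_mod_cast hN₁pos
  constructor
  · rw [div_le_div_iff₀ hrealZ hN₁posR]
    calc (μG A₁).toReal * (N₁.ncard : ℝ) = (N₁.ncard : ℝ) * (μG A₁).toReal := mul_comm _ _
      _ ≤ (N₂.ncard : ℝ) * (μG Z).toReal := ELr
  · rw [div_le_div_iff₀ hN₁posR hrealA₂]
    calc (N₂.ncard : ℝ) * (μG A₂).toReal ≤ (N₁.ncard : ℝ) * (μG X).toReal := EUr
      _ = (μG X).toReal * (N₁.ncard : ℝ) := mul_comm _ _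
end

section
/- Let G be a topological group, X a Hausdorff topological space, and G ↷ X a continuous action (i.e., the map G × X → X is continuous). Let x₀ ∈ X, let K be a compact subset of G, and let U be a neighborhood of the identity e in G. Then there exists a neighborhood V of x₀ in X such that for every g ∈ K \ Stab_G(x₀)U, gV ∩ V = ∅. -/
open Pointwise Topology

theorem far_returns_avoid_neighborhood
    {G X : Type*} [Group G] [TopologicalSpace G] [IsTopologicalGroup G]
    [TopologicalSpace X] [T2Space X] [MulAction G X]
    (hcont : Continuous fun p : G × X => p.1 • p.2)
    (x₀ : X) (K : Set G) (hK : IsCompact K) (U : Set G) (hU : U ∈ 𝓝 (1 : G)) :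
    ∃ V ∈ 𝓝 x₀, ∀ g ∈ K \ (((MulAction.stabilizer G x₀ : Subgroup G) : Set G) * U),
      (g • V) ∩ V = ∅ := by
  classical
  set S : Set G := ((MulAction.stabilizer G x₀ : Subgroup G) : Set G) * interior U with hS
  have hSopen : IsOpen S := by
    have : S = ⋃ s ∈ ((MulAction.stabilizer G x₀ : Subgroup G) : Set G), s • interior U := by
      ext g; simp [hS, Set.mem_mul, Set.mem_smul_set]
    rw [this]
    exact isOpen_biUnion fun s _ => isOpen_interior.smul s
  set C : Set G := K \ S with hC
  have hCcomp : IsCompact C := hK.diff hSopen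
  have key : ∀ g ∈ C, ∃ W ∈ 𝓝 g, ∃ V ∈ 𝓝 x₀, ∀ h ∈ W, (h • V) ∩ V = ∅ := by
    intro g hg
    have hne : g • x₀ ≠ x₀ := by
      intro h
      apply hg.2
      have hg1 : g ∈ ((MulAction.stabilizer G x₀ : Subgroup G) : Set G) := h
      have h1 : (1 : G) ∈ interior U := mem_interior_iff_mem_nhds.2 hU
      have := Set.mul_mem_mul hg1 h1
      simpa using this
    obtain ⟨A, B, hAo, hBo, hgA, hxB, hAB⟩ := t2_separation hne
    have hc : (fun p : G × X => p.1 • p.2) ⁻¹' A ∈ 𝓝 (g, x₀) :=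
      hcont.continuousAt (hAo.mem_nhds hgA)
    rw [nhds_prod_eq, Filter.mem_prod_iff] at hc
    obtain ⟨W, hW, V', hV', hWV⟩ := hc
    refine ⟨W, hW, V' ∩ B, Filter.inter_mem hV' (hBo.mem_nhds hxB), fun h hh => ?_⟩
    apply Set.eq_empty_of_forall_notMem
    rintro y ⟨⟨z, hz, rfl⟩, hy2⟩
    have h1 : h • z ∈ A := hWV (Set.mk_mem_prod hh hz.1)
    exact hAB.le_bot ⟨h1, hy2.2⟩
  choose! W hW V hV hWV using key
  obtain ⟨t, ht, hcover⟩ := hCcomp.elim_nhds_subcover W hW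
  refine ⟨⋂ g ∈ t, V g, ?_, ?_⟩
  · rcases t.eq_empty_or_nonempty with rfl | hne
    · simp
    · exact (Filter.biInter_finset_mem t).2 fun g hg => hV g (ht g hg)
  · intro g hg
    have hgC : g ∈ C := ⟨hg.1, fun hgS => hg.2 (Set.mul_subset_mul_left interior_subset hgS)⟩
    obtain ⟨i, hi, hgW⟩ := by simpa using hcover hgC
    have hsub : (⋂ g ∈ t, V g) ⊆ V i := Set.biInter_subset_of_mem hi
    have := hWV i (ht i hi) g hgW
    apply Set.eq_empty_of_forall_notMem
    rintro y ⟨hy1, hy2⟩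
    have : y ∈ (g • V i) ∩ V i :=
      ⟨Set.smul_set_mono hsub hy1, hsub hy2⟩
    rw [hWV i (ht i hi) g hgW] at this
    exact this
end

section
/- Let G be a locally compact Hausdorff unimodular group, X a Hausdorff topological space, ν an atomless regular Borel measure on X, and G ↷ X a continuous measure-preserving action. Assume there exists x₀ in the support of ν such that Stab_G(x₀) is compact and ν(Kx₀) = 0 for every compact subset K of G. Then for each compact symmetric neighborhood S of the identity e in G, there exist a compact symmetric neighborhood F of e and a sequence of neighborhoods of x₀ in X that is of (S,F)-moderate growth. -/
open MeasureTheory Pointwise Filter Topology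
open scoped ENNReal NNReal

lemma aux_tendsto_rpow_one_div (c : ℝ≥0∞) (hc0 : c ≠ 0) (hctop : c ≠ ⊤) :
    Tendsto (fun n : ℕ => c ^ (1 / (n : ℝ))) atTop (𝓝 1) := by
  lift c to ℝ≥0 using hctop
  have hc0' : c ≠ 0 := by simpa using hc0
  have h1 : Tendsto (fun n : ℕ => 1 / (n : ℝ)) atTop (𝓝 0) :=
    tendsto_one_div_atTop_nhds_zero_nat
  have h2 : Tendsto (fun n : ℕ => c ^ (1 / (n : ℝ))) atTop (𝓝 (c ^ (0 : ℝ))) :=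
    Tendsto.nnrpow tendsto_const_nhds h1 (Or.inl hc0')
  rw [NNReal.rpow_zero] at h2
  have h3 := ENNReal.tendsto_coe.2 h2
  simpa [ENNReal.coe_rpow_of_ne_zero hc0'] using h3

/-- A sequence `(B n)` of measurable subsets of `X` has `(S, F)`-moderate growth for the
measure-preserving action of `G` on `(X, ν)`. -/
def ModerateGrowth {G X : Type*} [Group G] [MeasurableSpace X] [SMul G X]
    (ν : Measure X) (S F : Set G) (B : ℕ → Set X) : Prop :=
  (∀ n, MeasurableSet (B n)) ∧
  (∀ n, 0 < ν (B n)) ∧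
  (∀ n : ℕ,
    sInf {m : ℝ≥0∞ | ∃ C : Set X, MeasurableSet C ∧ (S ^ n) • B n ⊆ C ∧ m = ν C} < 1 / 2) ∧
  1 ≤ limsup (fun n : ℕ => (⨅ g ∈ F, ν ((g • B n) ∩ B n) / ν (B n)) ^ (1 / (n : ℝ))) atTop

theorem exists_moderate_growth_neighborhoods
    {G X : Type*} [Group G] [TopologicalSpace G] [IsTopologicalGroup G]
    [LocallyCompactSpace G] [T2Space G] [MeasurableSpace G] [BorelSpace G]
    -- `G` is unimodular: a left Haar measure `μG` which is also right invariant
    (μG : Measure G) [μG.IsHaarMeasure] [μG.IsMulRightInvariant]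
    -- `X` a Hausdorff topological space, `ν` an atomless regular Borel measure on `X`
    [TopologicalSpace X] [T2Space X] [MeasurableSpace X] [BorelSpace X]
    (ν : Measure X) [ν.Regular]
    (hatomless : ∀ A : Set X, MeasurableSet A → 0 < ν A →
      ∃ B ⊆ A, MeasurableSet B ∧ ν B ≠ 0 ∧ ν B ≠ ν A)
    -- a continuous measure-preserving action of `G` on `X`
    [MulAction G X]
    (hcont : Continuous fun p : G × X => p.1 • p.2)
    (hact : ∀ g : G, MeasurePreserving (fun x : X => g • x) ν ν)
    -- a point `x₀` of the support of `ν` with compact stabilizer and null partial orbits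
    (x₀ : X)
    (hsupp : ∀ U : Set X, IsOpen U → x₀ ∈ U → 0 < ν U)
    (hstab : IsCompact ((MulAction.stabilizer G x₀ : Subgroup G) : Set G))
    (horbit : ∀ K : Set G, IsCompact K → ν ((fun g : G => g • x₀) '' K) = 0) :
    ∀ S : Set G, IsCompact S → S = S⁻¹ → S ∈ 𝓝 (1 : G) →
      ∃ F : Set G, IsCompact F ∧ F = F⁻¹ ∧ F ∈ 𝓝 (1 : G) ∧
        ∃ B : ℕ → Set X, (∀ n, B n ∈ 𝓝 x₀) ∧ ModerateGrowth ν S F B := by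
  intro S hScpt hSsymm hSnhds
  have h1S : (1 : G) ∈ S := mem_of_mem_nhds hSnhds
  -- continuity of each translation
  have hconstG : ∀ g : G, Continuous fun x : X => g • x := fun g =>
    hcont.comp (continuous_const.prodMk continuous_id)
  have hopen_smul : ∀ (g : G) (t : Set X), IsOpen t → IsOpen (g • t) := by
    intro g t ht
    have h : g • t = (fun x : X => g⁻¹ • x) ⁻¹' t := by
      ext x; simp [Set.mem_smul_set_iff_inv_smul_mem]
    rw [h]
    exact ht.preimage (hconstG g⁻¹)
  have hopen_setsmul : ∀ (s : Set G) (t : Set X), IsOpen t → IsOpen (s • t) := by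
    intro s t ht
    rw [← Set.iUnion_smul_set]
    exact isOpen_biUnion fun g _ => hopen_smul g t ht
  have hmeas_smul : ∀ (g : G) (A : Set X), MeasurableSet A → ν (g • A) = ν A := by
    intro g A hA
    have h : g • A = (fun x : X => g⁻¹ • x) ⁻¹' A := by
      ext x; simp [Set.mem_smul_set_iff_inv_smul_mem]
    rw [h, (hact g⁻¹).measure_preimage hA.nullMeasurableSet]
  -- powers of S are compact
  have hpow : ∀ m : ℕ, IsCompact (S ^ m) := by
    intro m
    induction m with
    | zero => rw [pow_zero, ← Set.singleton_one]; exact isCompact_singleton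
    | succ k ih => rw [pow_succ]; exact ih.mul hScpt
  -- choose small neighborhoods W n with ν (S^(n+2) • W n) < 1/2
  have hW : ∀ n : ℕ, ∃ W : Set X, IsOpen W ∧ x₀ ∈ W ∧ ν ((S ^ (n + 2)) • W) < 1 / 2 := by
    intro n
    set K := S ^ (n + 2) with hK
    have hKcpt : IsCompact K := hpow (n + 2)
    have horb : ν ((fun g : G => g • x₀) '' K) = 0 := horbit K hKcpt
    obtain ⟨U, hUsub, hUopen, hUlt⟩ :=
      Set.exists_isOpen_lt_of_lt ((fun g : G => g • x₀) '' K) (1 / 2)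
        (by rw [horb]; norm_num)
    -- for each k in K find product neighborhoods mapping into U
    have hnb : ∀ k ∈ K, ∃ A : Set G, A ∈ 𝓝 k ∧ ∃ V : Set X, V ∈ 𝓝 x₀ ∧
        ∀ a ∈ A, ∀ w ∈ V, a • w ∈ U := by
      intro k hk
      have hkx : k • x₀ ∈ U := hUsub ⟨k, hk, rfl⟩
      have hmem : (fun p : G × X => p.1 • p.2) ⁻¹' U ∈ 𝓝 (k, x₀) :=
        hcont.continuousAt (hUopen.mem_nhds hkx)
      rw [mem_nhds_prod_iff] at hmem
      obtain ⟨A, hA, V, hV, hAV⟩ := hmem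
      exact ⟨A, hA, V, hV, fun a ha w hw => hAV (Set.mk_mem_prod ha hw)⟩
    choose! A hA V hV hAVU using hnb
    obtain ⟨t, ht⟩ := hKcpt.elim_nhds_subcover' (fun k hk => A k) (fun k hk => hA k hk)
    -- W = interior of intersection of the V's
    set W0 : Set X := ⋂ k ∈ t, V k with hW0
    have hW0nhds : W0 ∈ 𝓝 x₀ := by
      refine (Filter.biInter_finset_mem t).2 fun k _ => hV k k.2
    refine ⟨interior W0, isOpen_interior, mem_interior_iff_mem_nhds.2 hW0nhds, ?_⟩
    refine lt_of_le_of_lt (measure_mono ?_) hUlt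
    rintro x ⟨k, hk, w, hw, rfl⟩
    obtain ⟨ki, hki, hkA⟩ := Set.mem_iUnion₂.1 (ht hk)
    have hwV : w ∈ V ki := by
      have := interior_subset hw
      exact Set.mem_iInter₂.1 this ki hki
    exact hAVU ki ki.2 k hkA w hwV
  choose W hWopen hWx hWsmall using hW
  -- F := S, B n := (S * S) • W n
  refine ⟨S, hScpt, hSsymm, hSnhds, fun n => (S * S) • W n, ?_, ?_, ?_, ?_, ?_⟩
  · -- neighborhoods of x₀
    intro n
    refine (hopen_setsmul _ _ (hWopen n)).mem_nhds ?_
    have : ((1 : G) * 1) • x₀ ∈ (S * S) • W n :=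
      Set.smul_mem_smul (Set.mul_mem_mul h1S h1S) (hWx n)
    simpa using this
  · -- measurable
    exact fun n => (hopen_setsmul _ _ (hWopen n)).measurableSet
  · -- positive measure
    intro n
    refine hsupp _ (hopen_setsmul _ _ (hWopen n)) ?_
    have : ((1 : G) * 1) • x₀ ∈ (S * S) • W n :=
      Set.smul_mem_smul (Set.mul_mem_mul h1S h1S) (hWx n)
    simpa using this
  · -- small thickenings
    intro n
    have heq : (S ^ n) • ((S * S) • W n) = (S ^ (n + 2)) • W n := by
      rw [← mul_smul, ← sq, ← pow_add]
    refine lt_of_le_of_lt (sInf_le ?_) (hWsmall n)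
    exact ⟨(S ^ (n + 2)) • W n, (hopen_setsmul _ _ (hWopen n)).measurableSet, heq.subset, rfl⟩
  · -- the limsup condition
    -- cover S*S by finitely many translates of interior S
    have h1int : (1 : G) ∈ interior S := mem_interior_iff_mem_nhds.2 hSnhds
    obtain ⟨t, _htmem, ht⟩ := (hScpt.mul hScpt).elim_nhds_subcover (fun x => x • interior S)
      (fun x _ => by
        refine (isOpen_interior.smul x).mem_nhds ?_
        exact ⟨1, h1int, mul_one x⟩)
    set N : ℕ := t.card with hN
    set B : ℕ → Set X := fun n => (S * S) • W n with hB
    set V : ℕ → Set X := fun n => S • W n with hVdef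
    have hVopen : ∀ n, IsOpen (V n) := fun n => hopen_setsmul _ _ (hWopen n)
    have hVpos : ∀ n, 0 < ν (V n) := by
      intro n
      refine hsupp _ (hVopen n) ?_
      have : (1 : G) • x₀ ∈ S • W n := Set.smul_mem_smul h1S (hWx n)
      simpa using this
    have hBpos : ∀ n, 0 < ν (B n) := by
      intro n
      refine hsupp _ (hopen_setsmul _ _ (hWopen n)) ?_
      have : ((1 : G) * 1) • x₀ ∈ (S * S) • W n :=
        Set.smul_mem_smul (Set.mul_mem_mul h1S h1S) (hWx n)
      simpa using this
    have hBlt : ∀ n, ν (B n) < 1 / 2 := by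
      intro n
      refine lt_of_le_of_lt (measure_mono ?_) (hWsmall n)
      refine Set.smul_subset_smul_right ?_
      calc S * S = S ^ 2 := (sq S).symm
        _ ⊆ S ^ (n + 2) := Set.pow_subset_pow_right h1S (by omega)
    have hVB : ∀ n, V n ⊆ B n := by
      intro n x hx
      obtain ⟨s, hs, w, hw, rfl⟩ := hx
      have : (s * 1) • w ∈ (S * S) • W n :=
        Set.smul_mem_smul (Set.mul_mem_mul hs h1S) hw
      simpa using this
    have hVgB : ∀ n, ∀ g ∈ S, V n ⊆ g • B n := by
      intro n g hg x hx
      obtain ⟨s, hs, w, hw, rfl⟩ := hx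
      have hginv : g⁻¹ ∈ S := by
        rw [hSsymm] at hg
        exact Set.mem_inv.1 hg
      have hmem : (g⁻¹ * s) • w ∈ B n :=
        Set.smul_mem_smul (Set.mul_mem_mul hginv hs) hw
      have : g • ((g⁻¹ * s) • w) ∈ g • B n := Set.smul_mem_smul_set hmem
      simpa [smul_smul, mul_assoc] using this
    -- the covering bound
    have hBle : ∀ n, ν (B n) ≤ N * ν (V n) := by
      intro n
      have hcov : B n ⊆ ⋃ g ∈ t, g • V n := by
        rintro x ⟨k, hk, w, hw, rfl⟩
        obtain ⟨g, hg, hkg⟩ := Set.mem_iUnion₂.1 (ht hk)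
        obtain ⟨s', hs', rfl⟩ := hkg
        refine Set.mem_iUnion₂.2 ⟨g, hg, ?_⟩
        have h1 : s' • w ∈ V n := Set.smul_mem_smul (interior_subset hs') hw
        have h2 : g • (s' • w) ∈ g • V n := Set.smul_mem_smul_set h1
        simpa [smul_smul, smul_eq_mul] using h2
      calc ν (B n) ≤ ν (⋃ g ∈ t, g • V n) := measure_mono hcov
        _ ≤ ∑ g ∈ t, ν (g • V n) := measure_biUnion_finset_le t _
        _ = ∑ _g ∈ t, ν (V n) := by
            refine Finset.sum_congr rfl fun g _ => ?_
            exact hmeas_smul g (V n) (hVopen n).measurableSet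
        _ = N * ν (V n) := by rw [Finset.sum_const, nsmul_eq_mul, hN]
    have hNne : (N : ℝ≥0∞) ≠ 0 := by
      intro h
      have := hBle 0
      rw [h, zero_mul] at this
      exact (hBpos 0).ne' (le_antisymm this zero_le)
    have hNtop : (N : ℝ≥0∞) ≠ ⊤ := ENNReal.natCast_ne_top N
    -- uniform lower bound on the infimum
    have hinf : ∀ n, (N : ℝ≥0∞)⁻¹ ≤ ⨅ g ∈ S, ν ((g • B n) ∩ B n) / ν (B n) := by
      intro n
      refine le_iInf₂ fun g hg => ?_
      have hν0 : ν (B n) ≠ 0 := (hBpos n).ne'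
      have hνtop : ν (B n) ≠ ⊤ := (hBlt n).ne_top
      rw [ENNReal.le_div_iff_mul_le (Or.inl hν0) (Or.inl hνtop)]
      have hsub : V n ⊆ (g • B n) ∩ B n := Set.subset_inter (hVgB n g hg) (hVB n)
      calc (N : ℝ≥0∞)⁻¹ * ν (B n) ≤ (N : ℝ≥0∞)⁻¹ * ((N : ℝ≥0∞) * ν (V n)) := by
            exact mul_le_mul_right (hBle n) _
        _ = ν (V n) := by rw [← mul_assoc, ENNReal.inv_mul_cancel hNne hNtop, one_mul]
        _ ≤ ν ((g • B n) ∩ B n) := measure_mono hsub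
    -- conclude via the limit of c ^ (1/n)
    set c : ℝ≥0∞ := (N : ℝ≥0∞)⁻¹ with hc
    have hc0 : c ≠ 0 := ENNReal.inv_ne_zero.2 hNtop
    have hctop : c ≠ ⊤ := ENNReal.inv_ne_top.2 hNne
    have hterm : ∀ n : ℕ,
        c ^ (1 / (n : ℝ)) ≤ (⨅ g ∈ S, ν ((g • B n) ∩ B n) / ν (B n)) ^ (1 / (n : ℝ)) := by
      intro n
      exact ENNReal.rpow_le_rpow (hinf n) (by positivity)
    have htend := aux_tendsto_rpow_one_div c hc0 hctop
    have hlim1 : liminf (fun n : ℕ => c ^ (1 / (n : ℝ))) atTop = 1 := htend.liminf_eq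
    calc (1 : ℝ≥0∞) = liminf (fun n : ℕ => c ^ (1 / (n : ℝ))) atTop := hlim1.symm
      _ ≤ liminf (fun n : ℕ =>
            (⨅ g ∈ S, ν ((g • B n) ∩ B n) / ν (B n)) ^ (1 / (n : ℝ))) atTop :=
          liminf_le_liminf (Eventually.of_forall hterm)
      _ ≤ limsup (fun n : ℕ =>
            (⨅ g ∈ S, ν ((g • B n) ∩ B n) / ν (B n)) ^ (1 / (n : ℝ))) atTop :=
          liminf_le_limsup
end
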